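/- For every n ≥ 1, the equation x^n + y^n = z^{n+1} is not partition regular on the positive integers except for the constant solution x = y = z = 2: there exists a finite coloring of the positive integers such that every monochromatic solution (x, y, z) satisfies x = y = z = 2. -/

import Mathlib

noncomputable def Lfun (n B : ℕ) : ℕ :=
  (⌊Real.log B / Real.log ((n + 1 : ℝ) / n)⌋).toNat

lemma Lfun_succ (n t : ℕ) (hn : 1 ≤ n) (ht : 1 ≤ t) :
    Lfun n (t * (n + 1)) = Lfun n (t * n) + 1 := by
  unfold Lfun
  have hn0 : (0:ℝ) < (n:ℝ) := by exact_mod_cast hn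
  have hr1 : (1:ℝ) < (n + 1 : ℝ) / n := by
    rw [lt_div_iff₀ hn0]; linarith
  have hr : 0 < Real.log ((n + 1 : ℝ) / n) := Real.log_pos hr1
  have htn : (0:ℝ) < ((t * n : ℕ) : ℝ) := by
    exact_mod_cast Nat.mul_pos ht hn
  have hcast : ((t * (n + 1) : ℕ) : ℝ) = ((t * n : ℕ) : ℝ) * ((n + 1 : ℝ) / n) := by
    push_cast; field_simp
  have hlog : Real.log ((t * (n + 1) : ℕ) : ℝ)
      = Real.log ((t * n : ℕ) : ℝ) + Real.log ((n + 1 : ℝ) / n) := by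
    rw [hcast, Real.log_mul (ne_of_gt htn) (by positivity)]
  have hdiv : Real.log ((t * (n + 1) : ℕ) : ℝ) / Real.log ((n + 1 : ℝ) / n)
      = Real.log ((t * n : ℕ) : ℝ) / Real.log ((n + 1 : ℝ) / n) + 1 := by
    rw [hlog]; field_simp
  rw [hdiv, Int.floor_add_one]
  have hfl : 0 ≤ ⌊Real.log ((t * n : ℕ) : ℝ) / Real.log ((n + 1 : ℝ) / n)⌋ := by
    apply Int.floor_nonneg.mpr
    apply div_nonneg _ hr.le
    apply Real.log_nonneg
    exact_mod_cast Nat.one_le_iff_ne_zero.mpr (by positivity)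
  omega

noncomputable def col (n x : ℕ) : ℕ :=
  if x < 2 ^ (n + 1) then x
  else 2 ^ (n + 1) + (Nat.log 2 x % (2 * n + 2)) * 2
        + Lfun n ((Nat.log 2 x + n) / (2 * n + 2)) % 2

lemma col_lt (n x : ℕ) : col n x < 2 ^ (n + 1) + 2 * (2 * n + 2) := by
  unfold col
  split
  · omega
  · have h1 : Nat.log 2 x % (2 * n + 2) < 2 * n + 2 := Nat.mod_lt _ (by omega)
    have h2 : Lfun n ((Nat.log 2 x + n) / (2 * n + 2)) % 2 < 2 := Nat.mod_lt _ (by omega)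
    omega

lemma no_large_aux (n : ℕ) (hn : 1 ≤ n) (w v z : ℕ)
    (hvw : Nat.log 2 v ≤ Nat.log 2 w)
    (hw : 2 ^ (n + 1) ≤ w) (hz : 2 ^ (n + 1) ≤ z)
    (hmod : Nat.log 2 w % (2 * n + 2) = Nat.log 2 z % (2 * n + 2))
    (hpar : Lfun n ((Nat.log 2 w + n) / (2 * n + 2)) % 2
          = Lfun n ((Nat.log 2 z + n) / (2 * n + 2)) % 2)
    (heq : w ^ n + v ^ n = z ^ (n + 1)) : False := by
  set m := 2 * n + 2 with hm
  set M := Nat.log 2 w with hM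
  set c := Nat.log 2 z with hc
  have hpow1 : (1:ℕ) ≤ 2 ^ (n + 1) := Nat.one_le_two_pow
  have hw0 : w ≠ 0 := by omega
  have hz0 : z ≠ 0 := by omega
  have h2 : (1:ℕ) < 2 := one_lt_two
  -- index lower bounds
  have hM1 : n + 1 ≤ M := (Nat.le_log_iff_pow_le h2 hw0).mpr hw
  have hc1 : n + 1 ≤ c := (Nat.le_log_iff_pow_le h2 hz0).mpr hz
  -- dyadic bounds
  have wlow : 2 ^ M ≤ w := Nat.pow_log_le_self 2 hw0
  have whigh : w < 2 ^ (M + 1) := Nat.lt_pow_succ_log_self h2 w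
  have vhigh : v < 2 ^ (M + 1) :=
    lt_of_lt_of_le (Nat.lt_pow_succ_log_self h2 v) (Nat.pow_le_pow_right (by omega) (by omega))
  have zlow : 2 ^ (c * (n + 1)) ≤ z ^ (n + 1) := by
    calc 2 ^ (c * (n + 1)) = (2 ^ c) ^ (n + 1) := by rw [pow_mul]
    _ ≤ z ^ (n + 1) := Nat.pow_le_pow_left (Nat.pow_log_le_self 2 hz0) _
  have zhigh : z ^ (n + 1) < 2 ^ ((c + 1) * (n + 1)) := by
    calc z ^ (n + 1) < (2 ^ (c + 1)) ^ (n + 1) :=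
          Nat.pow_lt_pow_left (Nat.lt_pow_succ_log_self h2 z) (by omega)
    _ = 2 ^ ((c + 1) * (n + 1)) := by rw [pow_mul]
  have slow : 2 ^ (M * n) ≤ w ^ n + v ^ n := by
    calc 2 ^ (M * n) = (2 ^ M) ^ n := by rw [pow_mul]
    _ ≤ w ^ n := Nat.pow_le_pow_left wlow _
    _ ≤ w ^ n + v ^ n := Nat.le_add_right _ _
  have shigh : w ^ n + v ^ n < 2 ^ (M * n + n + 1) := by
    have h1 : w ^ n < 2 ^ (M * n + n) := by
      calc w ^ n < (2 ^ (M + 1)) ^ n := Nat.pow_lt_pow_left whigh (by omega)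
      _ = 2 ^ (M * n + n) := by rw [← pow_mul]; ring_nf
    have h2' : v ^ n < 2 ^ (M * n + n) := by
      calc v ^ n < (2 ^ (M + 1)) ^ n := Nat.pow_lt_pow_left vhigh (by omega)
      _ = 2 ^ (M * n + n) := by rw [← pow_mul]; ring_nf
    calc w ^ n + v ^ n < 2 ^ (M * n + n) + 2 ^ (M * n + n) := by omega
    _ = 2 ^ (M * n + n + 1) := by ring
  -- exponent inequalities
  have i1 : M * n < (c + 1) * (n + 1) := by
    have : 2 ^ (M * n) < 2 ^ ((c + 1) * (n + 1)) := by omega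
    exact (Nat.pow_lt_pow_iff_right h2).mp this
  have i2 : c * (n + 1) < M * n + n + 1 := by
    have : 2 ^ (c * (n + 1)) < 2 ^ (M * n + n + 1) := by omega
    exact (Nat.pow_lt_pow_iff_right h2).mp this
  clear slow shigh zlow zhigh wlow whigh vhigh heq hw hz hpow1 hvw hw0 hz0
  -- c < M
  have hcM : c < M := by
    by_contra h
    push_neg at h
    have h1 : M * (n + 1) ≤ c * (n + 1) := Nat.mul_le_mul_right _ h
    have e : M * (n + 1) = M * n + M := by ring
    linarith [hM1, i2]
  -- divisibility
  have hdvd : m ∣ M - c := (Nat.modEq_iff_dvd' hcM.le).mp hmod.symm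
  obtain ⟨t, htdef⟩ := hdvd
  have ht1 : 1 ≤ t := by
    rcases Nat.eq_zero_or_pos t with rfl | h
    · simp at htdef; omega
    · exact h
  have hMc : M = c + m * t := by
    have : m * t ≤ m * 1 * t := by ring_nf; omega
    omega
  have e1 : M * n = c * n + m * t * n := by rw [hMc]; ring
  have e2 : (c + 1) * (n + 1) = c * n + c + n + 1 := by ring
  have e3 : c * (n + 1) = c * n + c := by ring
  have b1 : m * t * n ≤ c + n := by linarith
  have b2 : c ≤ m * t * n + n := by linarith
  have dM : (M + n) / m = t * (n + 1) := by
    apply Nat.div_eq_of_lt_le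
    · have e4 : t * (n + 1) * m = m * t * n + m * t := by ring
      linarith [hMc]
    · have e5 : (t * (n + 1) + 1) * m = m * t * n + m * t + m := by ring
      have hm2 : m = 2 * n + 2 := hm
      linarith [hMc]
  have dc : (c + n) / m = t * n := by
    apply Nat.div_eq_of_lt_le
    · have e6 : t * n * m = m * t * n := by ring
      linarith
    · have e7 : (t * n + 1) * m = m * t * n + m := by ring
      have hm2 : m = 2 * n + 2 := hm
      linarith
  rw [dM, dc, Lfun_succ n t hn ht1] at hpar
  omega

lemma col_small (n x : ℕ) (h : x < 2 ^ (n + 1)) : col n x = x := by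
  simp [col, h]

lemma col_large_ge (n x : ℕ) (h : ¬ x < 2 ^ (n + 1)) : 2 ^ (n + 1) ≤ col n x := by
  unfold col; rw [if_neg h]; omega

lemma col_large_eq (n x z : ℕ) (hx : ¬ x < 2 ^ (n + 1)) (hz : ¬ z < 2 ^ (n + 1))
    (h : col n x = col n z) :
    Nat.log 2 x % (2 * n + 2) = Nat.log 2 z % (2 * n + 2) ∧
      Lfun n ((Nat.log 2 x + n) / (2 * n + 2)) % 2
        = Lfun n ((Nat.log 2 z + n) / (2 * n + 2)) % 2 := by
  unfold col at h
  rw [if_neg hx, if_neg hz] at h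
  have h1 : Lfun n ((Nat.log 2 x + n) / (2 * n + 2)) % 2 < 2 := Nat.mod_lt _ (by omega)
  have h2 : Lfun n ((Nat.log 2 z + n) / (2 * n + 2)) % 2 < 2 := Nat.mod_lt _ (by omega)
  omega

theorem xn_add_yn_eq_z_succ_not_PR (n : ℕ) (hn : 1 ≤ n) :
    ∃ (r : ℕ) (χ : ℕ → Fin r),
      ∀ x y z : ℕ, 0 < x → 0 < y → 0 < z →
        χ x = χ y → χ y = χ z → x ^ n + y ^ n = z ^ (n + 1) →
          x = 2 ∧ y = 2 ∧ z = 2 := by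
  refine ⟨2 ^ (n + 1) + 2 * (2 * n + 2), fun x => ⟨col n x, col_lt n x⟩, ?_⟩
  intro x y z hx hy hz hxy hyz heq
  have hxy' : col n x = col n y := congrArg Fin.val hxy
  have hyz' : col n y = col n z := congrArg Fin.val hyz
  by_cases hxs : x < 2 ^ (n + 1)
  · -- all small
    have hys : y < 2 ^ (n + 1) := by
      by_contra hys
      have := col_large_ge n y hys
      rw [col_small n x hxs] at hxy'; omega
    have hzs : z < 2 ^ (n + 1) := by
      by_contra hzs
      have := col_large_ge n z hzs
      rw [col_small n y hys] at hyz'; omega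
    rw [col_small n x hxs, col_small n y hys] at hxy'
    rw [col_small n y hys, col_small n z hzs] at hyz'
    subst hxy'; subst hyz'
    have hpow : 0 < x ^ n := Nat.pow_pos hx
    have h2 : x ^ n * 2 = x ^ n * x := by
      rw [pow_succ] at heq; linarith
    have : x = 2 := (Nat.eq_of_mul_eq_mul_left hpow h2).symm
    exact ⟨this, this, this⟩
  · -- all large
    exfalso
    have hys : ¬ y < 2 ^ (n + 1) := by
      intro hys
      have := col_large_ge n x hxs
      rw [col_small n y hys] at hxy'; omega
    have hzs : ¬ z < 2 ^ (n + 1) := by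
      intro hzs
      have := col_large_ge n y hys
      rw [col_small n z hzs] at hyz'; omega
    have hxz' : col n x = col n z := hxy'.trans hyz'
    obtain ⟨hmodx, hparx⟩ := col_large_eq n x z hxs hzs hxz'
    obtain ⟨hmody, hpary⟩ := col_large_eq n y z hys hzs hyz'
    rcases le_total (Nat.log 2 y) (Nat.log 2 x) with hle | hle
    · exact no_large_aux n hn x y z hle (by omega) (by omega) hmodx hparx heq
    · exact no_large_aux n hn y x z hle (by omega) (by omega) hmody hpary (by rw [← heq]; ring)
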